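/- Let Ψ⁻¹ : [0,∞) → [0,1) be a continuous increasing function (the inverse of an increasing bijection Ψ : [0,1) → [0,∞)), let u₁ ≥ u₂ ≥ ⋯ ≥ 0 satisfy ∑_k u_k ≤ ρ. Then any two measurable functions f, g : ℝ₊ → ℝ₊ satisfying f(t) = ∫₀ᵗ (1 − Ψ⁻¹(ρ − ∑_{k=1}^∞ [u_k − f(s)]₊)) ds for all t ≥ 0 (and likewise for g) are equal. Here [a]₊ = max(a,0), and Ψ⁻¹ is assumed continuously differentiable on [0, ρ]. -/

import Mathlib

open MeasureTheory

/-- Auxiliary lemma: any two solutions satisfy `f ≤ g` on `[0, ∞)`.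
The key point is that the integrand is antitone in the value of the solution. -/
private lemma stmt10_aux (ρ : ℝ) (ψ : ℝ → ℝ)
    (hψ_mono : StrictMonoOn ψ (Set.Ici 0))
    (hψ_range : ∀ s ≥ (0 : ℝ), ψ s ∈ Set.Ico (0 : ℝ) 1)
    (u : ℕ → ℝ) (hu0 : ∀ k, 1 ≤ k → 0 ≤ u k)
    (husum : Summable fun k : ℕ => u (k + 1))
    (hle : ∑' k : ℕ, u (k + 1) ≤ ρ)
    (f g : ℝ → ℝ) (hfm : Measurable f) (hgm : Measurable g)
    (hf0 : ∀ t, 0 ≤ f t) (hg0 : ∀ t, 0 ≤ g t)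
    (hf : ∀ t ≥ (0 : ℝ),
      f t = ∫ s in (0 : ℝ)..t, (1 - ψ (ρ - ∑' k : ℕ, max (u (k + 1) - f s) 0)))
    (hg : ∀ t ≥ (0 : ℝ),
      g t = ∫ s in (0 : ℝ)..t, (1 - ψ (ρ - ∑' k : ℕ, max (u (k + 1) - g s) 0))) :
    ∀ t ≥ (0 : ℝ), f t ≤ g t := by
  have hu : ∀ k : ℕ, 0 ≤ u (k + 1) := fun k => hu0 (k + 1) (by omega)
  -- clamped sum
  set S : ℝ → ℝ := fun x => ∑' k : ℕ, max (u (k + 1) - max x 0) 0 with hS_def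
  have hsum : ∀ x : ℝ, Summable fun k : ℕ => max (u (k + 1) - max x 0) 0 := by
    intro x
    refine Summable.of_nonneg_of_le (fun k => le_max_right _ _) (fun k => ?_) husum
    exact max_le (by nlinarith [le_max_right x 0, hu k]) (hu k)
  have hS_le : ∀ x : ℝ, S x ≤ ρ := by
    intro x
    refine le_trans (Summable.tsum_le_tsum (fun k => ?_) (hsum x) husum) hle
    exact max_le (by nlinarith [le_max_right x 0, hu k]) (hu k)
  have hS_anti : ∀ x y : ℝ, x ≤ y → S y ≤ S x := by
    intro x y hxy
    refine Summable.tsum_le_tsum (fun k => ?_) (hsum y) (hsum x)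
    have : max x 0 ≤ max y 0 := max_le_max hxy le_rfl
    exact max_le (le_max_of_le_left (by linarith)) (le_max_right _ _)
  -- clamped integrand value
  set Φ : ℝ → ℝ := fun x => ψ (ρ - S x) with hΦ_def
  have hargmem : ∀ x : ℝ, (0 : ℝ) ≤ ρ - S x := fun x => by linarith [hS_le x]
  have hΦ_mono : Monotone Φ := by
    intro x y hxy
    exact hψ_mono.monotoneOn (hargmem x) (hargmem y) (by linarith [hS_anti x y hxy])
  have hΦ_mem : ∀ x : ℝ, Φ x ∈ Set.Ico (0 : ℝ) 1 := fun x => hψ_range _ (hargmem x)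
  have hΦ_meas : Measurable Φ := hΦ_mono.measurable
  -- rewrite the fixed-point equations with the clamped integrand
  have hSf : ∀ s : ℝ, (∑' k : ℕ, max (u (k + 1) - f s) 0) = S (f s) := by
    intro s; simp only [hS_def, max_eq_left (hf0 s)]
  have hSg : ∀ s : ℝ, (∑' k : ℕ, max (u (k + 1) - g s) 0) = S (g s) := by
    intro s; simp only [hS_def, max_eq_left (hg0 s)]
  have hf' : ∀ t ≥ (0 : ℝ), f t = ∫ s in (0 : ℝ)..t, (1 - Φ (f s)) := by
    intro t ht; rw [hf t ht]; exact intervalIntegral.integral_congr fun s _ => by rw [hSf s]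
  have hg' : ∀ t ≥ (0 : ℝ), g t = ∫ s in (0 : ℝ)..t, (1 - Φ (g s)) := by
    intro t ht; rw [hg t ht]; exact intervalIntegral.integral_congr fun s _ => by rw [hSg s]
  -- interval integrability of the integrands
  have hint : ∀ h : ℝ → ℝ, Measurable h →
      ∀ a b : ℝ, IntervalIntegrable (fun s => 1 - Φ (h s)) volume a b := by
    intro h hm a b
    rw [intervalIntegrable_iff]
    refine Integrable.mono' (g := fun _ => (1 : ℝ))
      ((integrableOn_const_iff (C := (1 : ℝ))).mpr (Or.inr ?_)) ?_ ?_
    · rw [Set.uIoc]; exact measure_Ioc_lt_top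
    · exact ((measurable_const.sub (hΦ_meas.comp hm))).aestronglyMeasurable.restrict
    · filter_upwards with s
      have h1 := (hΦ_mem (h s)).1
      have h2 := (hΦ_mem (h s)).2
      rw [Real.norm_eq_abs, abs_le]
      constructor <;> linarith
  have hintf := hint f hfm
  have hintg := hint g hgm
  -- continuity of solutions on `[0, ∞)`
  have hcontf : Continuous fun b => ∫ s in (0 : ℝ)..b, (1 - Φ (f s)) :=
    intervalIntegral.continuous_primitive hintf 0
  have hcontg : Continuous fun b => ∫ s in (0 : ℝ)..b, (1 - Φ (g s)) :=
    intervalIntegral.continuous_primitive hintg 0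
  -- the main argument
  intro t ht
  by_contra hlt
  push_neg at hlt
  have hD0 : f 0 - g 0 = 0 := by
    have h1 := hf' 0 le_rfl
    have h2 := hg' 0 le_rfl
    rw [intervalIntegral.integral_same] at h1 h2
    rw [h1, h2, sub_zero]
  have hcontD : ContinuousOn (fun s => f s - g s) (Set.Icc 0 t) := by
    refine ((hcontf.sub hcontg).continuousOn).congr fun s hs => ?_
    show f s - g s = _
    rw [hf' s hs.1, hg' s hs.1]
    rfl
  set C : Set ℝ := Set.Icc 0 t ∩ (fun s => f s - g s) ⁻¹' Set.Iic 0 with hC_def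
  have hC_closed : IsClosed C :=
    hcontD.preimage_isClosed_of_isClosed isClosed_Icc isClosed_Iic
  have h0C : (0 : ℝ) ∈ C := ⟨⟨le_rfl, ht⟩, by simp [hD0]⟩
  have hC_bdd : BddAbove C := BddAbove.mono Set.inter_subset_left (bddAbove_Icc)
  set t₀ : ℝ := sSup C with ht₀_def
  have ht₀C : t₀ ∈ C := hC_closed.csSup_mem ⟨0, h0C⟩ hC_bdd
  have ht₀0 : 0 ≤ t₀ := ht₀C.1.1
  have ht₀t : t₀ ≤ t := ht₀C.1.2
  have hDt₀ : f t₀ - g t₀ ≤ 0 := ht₀C.2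
  have hDt : 0 < f t - g t := by linarith
  have ht₀lt : t₀ < t := ht₀t.lt_of_ne (fun h => by rw [h] at hDt₀; linarith)
  have hpos : ∀ s ∈ Set.Ioc t₀ t, g s < f s := by
    intro s hs
    by_contra hcon
    push_neg at hcon
    have hsC : s ∈ C := ⟨⟨le_trans ht₀0 hs.1.le, hs.2⟩, by simp; linarith⟩
    have := le_csSup hC_bdd hsC
    linarith [hs.1]
  -- D t - D t₀ equals an integral of a nonpositive function
  have hfdiff : f t - f t₀ = ∫ s in t₀..t, (1 - Φ (f s)) := by
    rw [hf' t ht, hf' t₀ ht₀0,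
      ← intervalIntegral.integral_add_adjacent_intervals (hintf 0 t₀) (hintf t₀ t)]
    ring
  have hgdiff : g t - g t₀ = ∫ s in t₀..t, (1 - Φ (g s)) := by
    rw [hg' t ht, hg' t₀ ht₀0,
      ← intervalIntegral.integral_add_adjacent_intervals (hintg 0 t₀) (hintg t₀ t)]
    ring
  have hkey : (f t - f t₀) - (g t - g t₀) ≤ 0 := by
    rw [hfdiff, hgdiff, ← intervalIntegral.integral_sub (hintf t₀ t) (hintg t₀ t)]
    rw [intervalIntegral.integral_of_le ht₀lt.le]
    refine setIntegral_nonpos measurableSet_Ioc fun s hs => ?_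
    have := hΦ_mono (hpos s hs).le
    linarith
  linarith

/-- Uniqueness of the solution to the hydrodynamic integral equation.
`ψ` plays the role of `Ψ⁻¹`. -/
theorem stmt10 (ρ : ℝ) (hρ : 0 ≤ ρ) (ψ : ℝ → ℝ)
    (hψ_mono : StrictMonoOn ψ (Set.Ici 0))
    (hψ_range : ∀ s ≥ (0 : ℝ), ψ s ∈ Set.Ico (0 : ℝ) 1)
    (hψ_cd : ContDiffOn ℝ 1 ψ (Set.Icc 0 ρ))
    (u : ℕ → ℝ) (hu0 : ∀ k, 1 ≤ k → 0 ≤ u k)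
    (humono : ∀ k, 1 ≤ k → u (k + 1) ≤ u k)
    (husum : Summable fun k : ℕ => u (k + 1))
    (hle : ∑' k : ℕ, u (k + 1) ≤ ρ)
    (f g : ℝ → ℝ) (hfm : Measurable f) (hgm : Measurable g)
    (hf0 : ∀ t, 0 ≤ f t) (hg0 : ∀ t, 0 ≤ g t)
    (hf : ∀ t ≥ (0 : ℝ),
      f t = ∫ s in (0 : ℝ)..t, (1 - ψ (ρ - ∑' k : ℕ, max (u (k + 1) - f s) 0)))
    (hg : ∀ t ≥ (0 : ℝ),
      g t = ∫ s in (0 : ℝ)..t, (1 - ψ (ρ - ∑' k : ℕ, max (u (k + 1) - g s) 0))) :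
    ∀ t ≥ (0 : ℝ), f t = g t := by
  intro t ht
  exact le_antisymm
    (stmt10_aux ρ ψ hψ_mono hψ_range u hu0 husum hle f g hfm hgm hf0 hg0 hf hg t ht)
    (stmt10_aux ρ ψ hψ_mono hψ_range u hu0 husum hle g f hgm hfm hg0 hf0 hg hf t ht)
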